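/- arXiv:2602.00413 — 2 statements merged into one kernel-verified Lean document; each statement's English description precedes it below -/
import Mathlib

section
/- Let x ∈ ℝ^d with pₜ(x) > 0, and assume E(x) := ∫ p_{1|t}(x₁ | x) exp(r(x₁)/β) dx₁ is finite and positive. Then qₜ(x) = pₜ(x) E(x) / Z > 0, and the marginal velocity of the reward-weighted model decomposes as v_q(x) = v_p(x) + ∫ p_{1|t}(x₁ | x) (R(x₁, x) − 1) u(x, x₁) dx₁, where R(x₁, x) := exp(r(x₁)/β) / E(x). That is, the aligned velocity field equals the pre-trained velocity field plus a reward-driven velocity guidance term given by the posterior expectation of (R − 1) times the conditional velocity. -/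
open MeasureTheory Filter

noncomputable section

/-- `Vec d` is `ℝ^d`, equipped with Lebesgue measure. -/
abbrev Vec (d : ℕ) := EuclideanSpace ℝ (Fin d)

variable {d : ℕ}

/-- The marginal `pₜ(x) = ∫ κ(x | x₁) p₁(x₁) dx₁`. -/
def pT (κ : Vec d → Vec d → ℝ) (p₁ : Vec d → ℝ) (x : Vec d) : ℝ :=
  ∫ x₁, κ x x₁ * p₁ x₁

/-- The posterior `p_{1|t}(x₁ | x) = κ(x | x₁) p₁(x₁) / pₜ(x)`. -/
def post (κ : Vec d → Vec d → ℝ) (p₁ : Vec d → ℝ) (x x₁ : Vec d) : ℝ :=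
  κ x x₁ * p₁ x₁ / pT κ p₁ x

/-- The normalizing constant `Z = ∫ p₁(x₁) exp(r(x₁)/β) dx₁`. -/
def Zconst (p₁ r : Vec d → ℝ) (β : ℝ) : ℝ :=
  ∫ x₁, p₁ x₁ * Real.exp (r x₁ / β)

/-- The reward-weighted data density `q₁(x₁) = p₁(x₁) exp(r(x₁)/β) / Z`. -/
def q1 (p₁ r : Vec d → ℝ) (β : ℝ) (x₁ : Vec d) : ℝ :=
  p₁ x₁ * Real.exp (r x₁ / β) / Zconst p₁ r β

/-- The tilted marginal `qₜ(x) = ∫ κ(x | x₁) q₁(x₁) dx₁`. -/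
def qT (κ : Vec d → Vec d → ℝ) (p₁ r : Vec d → ℝ) (β : ℝ) (x : Vec d) : ℝ :=
  ∫ x₁, κ x x₁ * q1 p₁ r β x₁

/-- The tilted posterior `q_{1|t}(x₁ | x) = κ(x | x₁) q₁(x₁) / qₜ(x)`. -/
def qPost (κ : Vec d → Vec d → ℝ) (p₁ r : Vec d → ℝ) (β : ℝ) (x x₁ : Vec d) : ℝ :=
  κ x x₁ * q1 p₁ r β x₁ / qT κ p₁ r β x

/-- The posterior expectation `E(x) = ∫ p_{1|t}(x₁ | x) exp(r(x₁)/β) dx₁`. -/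
def Efun (κ : Vec d → Vec d → ℝ) (p₁ r : Vec d → ℝ) (β : ℝ) (x : Vec d) : ℝ :=
  ∫ x₁, post κ p₁ x x₁ * Real.exp (r x₁ / β)

/-- The marginal velocity `v_p(x) = ∫ p_{1|t}(x₁ | x) u(x, x₁) dx₁` of the reference model. -/
def vP (κ : Vec d → Vec d → ℝ) (p₁ : Vec d → ℝ) (u : Vec d → Vec d → Vec d)
    (x : Vec d) : Vec d :=
  ∫ x₁, post κ p₁ x x₁ • u x x₁

/-- The marginal velocity `v_q(x) = ∫ q_{1|t}(x₁ | x) u(x, x₁) dx₁` of the tilted model. -/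
def vQ (κ : Vec d → Vec d → ℝ) (p₁ r : Vec d → ℝ) (β : ℝ) (u : Vec d → Vec d → Vec d)
    (x : Vec d) : Vec d :=
  ∫ x₁, qPost κ p₁ r β x x₁ • u x x₁


lemma aux_smul_int {d : ℕ} {f : Vec d → ℝ} {g : Vec d → Vec d}
    (hf : Integrable f) (hg : AEStronglyMeasurable g volume) {C : ℝ}
    (hC : ∀ y, ‖g y‖ ≤ C) : Integrable (fun y => f y • g y) := by
  refine Integrable.mono' (hf.norm.mul_const C) (hf.aestronglyMeasurable.smul hg) ?_
  filter_upwards with y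
  rw [norm_smul]
  exact mul_le_mul_of_nonneg_left (hC y) (norm_nonneg _)

/-- The aligned (reward-weighted) marginal velocity equals the pre-trained
velocity plus the posterior expectation of `(R − 1)` times the conditional velocity. -/
theorem reward_weighted_velocity_decomposition
    (d : ℕ) (hd : 1 ≤ d)
    -- `p₁` is a probability density
    (p₁ : Vec d → ℝ) (hp₁_meas : Measurable p₁) (hp₁_nonneg : ∀ x₁, 0 ≤ p₁ x₁)
    (hp₁_int : ∫ x₁, p₁ x₁ = 1)
    -- `κ` is a conditional kernel: nonnegative, measurable, a density in its first argument
    (κ : Vec d → Vec d → ℝ) (hκ_meas : Measurable (Function.uncurry κ))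
    (hκ_nonneg : ∀ x x₁, 0 ≤ κ x x₁) (hκ_dens : ∀ x₁, ∫ x, κ x x₁ = 1)
    -- `u` is a measurable bounded conditional velocity field
    (u : Vec d → Vec d → Vec d) (hu_meas : Measurable (Function.uncurry u))
    (hu_bdd : ∃ C, ∀ x x₁, ‖u x x₁‖ ≤ C)
    -- reward `r`, `β > 0`, and `Z` finite and positive
    (r : Vec d → ℝ) (hr_meas : Measurable r) (β : ℝ) (hβ : 0 < β)
    (hZ_int : Integrable (fun x₁ => p₁ x₁ * Real.exp (r x₁ / β)))
    (hZ_pos : 0 < Zconst p₁ r β)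
    -- the point `x`, with `pₜ(x) > 0` and `E(x)` finite and positive
    (x : Vec d) (hpt_pos : 0 < pT κ p₁ x)
    (hE_int : Integrable (fun x₁ => post κ p₁ x x₁ * Real.exp (r x₁ / β)))
    (hE_pos : 0 < Efun κ p₁ r β x) :
    -- `qₜ(x) = pₜ(x) E(x) / Z > 0`
    qT κ p₁ r β x = pT κ p₁ x * Efun κ p₁ r β x / Zconst p₁ r β ∧
    0 < qT κ p₁ r β x ∧
    -- velocity decomposition with `R(x₁, x) = exp(r(x₁)/β) / E(x)`
    vQ κ p₁ r β u x
      = vP κ p₁ u x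
        + ∫ x₁, (post κ p₁ x x₁
            * (Real.exp (r x₁ / β) / Efun κ p₁ r β x - 1)) • u x x₁ := by
  obtain ⟨C, hC⟩ := hu_bdd
  have hpt_ne : pT κ p₁ x ≠ 0 := ne_of_gt hpt_pos
  have hZ_ne : Zconst p₁ r β ≠ 0 := ne_of_gt hZ_pos
  have hE_ne : Efun κ p₁ r β x ≠ 0 := ne_of_gt hE_pos
  -- integrability of κ·p₁
  have hκp_int : Integrable (fun x₁ => κ x x₁ * p₁ x₁) := by
    by_contra h
    rw [pT, integral_undef h] at hpt_pos
    exact lt_irrefl 0 hpt_pos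
  have hu_x_meas : AEStronglyMeasurable (fun x₁ => u x x₁) volume :=
    (hu_meas.comp measurable_prodMk_left).aestronglyMeasurable
  have hpost_int : Integrable (fun x₁ => post κ p₁ x x₁) := by
    simpa [post, div_eq_mul_inv] using hκp_int.mul_const (pT κ p₁ x)⁻¹
  -- key identity: ∫ κ p₁ exp = pT * Efun
  have hE_eq : Efun κ p₁ r β x = (∫ x₁, κ x x₁ * p₁ x₁ * Real.exp (r x₁ / β)) / pT κ p₁ x := by
    rw [Efun]
    simp_rw [post, div_mul_eq_mul_div]
    rw [integral_div]
  have hI : (∫ x₁, κ x x₁ * p₁ x₁ * Real.exp (r x₁ / β)) = pT κ p₁ x * Efun κ p₁ r β x := by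
    rw [hE_eq]
    field_simp
  have hqT : qT κ p₁ r β x = pT κ p₁ x * Efun κ p₁ r β x / Zconst p₁ r β := by
    rw [qT]
    simp_rw [q1, mul_div_assoc', ← mul_assoc]
    rw [integral_div, hI]
  have hqT_pos : 0 < qT κ p₁ r β x := by
    rw [hqT]
    positivity
  refine ⟨hqT, hqT_pos, ?_⟩
  -- qPost = post * exp / E
  have hqPost : ∀ x₁, qPost κ p₁ r β x x₁
      = post κ p₁ x x₁ * Real.exp (r x₁ / β) / Efun κ p₁ r β x := by
    intro x₁
    rw [qPost, hqT, q1, post]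
    field_simp
  have hB : Integrable (fun x₁ => post κ p₁ x x₁ • u x x₁) :=
    aux_smul_int hpost_int hu_x_meas (fun y => hC x y)
  have hA : Integrable (fun x₁ =>
      (post κ p₁ x x₁ * Real.exp (r x₁ / β) / Efun κ p₁ r β x) • u x x₁) := by
    have := aux_smul_int (hE_int.div_const (Efun κ p₁ r β x)) hu_x_meas (fun y => hC x y)
    simpa using this
  have hvQ : vQ κ p₁ r β u x
      = ∫ x₁, (post κ p₁ x x₁ * Real.exp (r x₁ / β) / Efun κ p₁ r β x) • u x x₁ := by
    rw [vQ]
    congr 1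
    ext x₁
    rw [hqPost]
  have hsplit : ∀ x₁, (post κ p₁ x x₁
        * (Real.exp (r x₁ / β) / Efun κ p₁ r β x - 1)) • u x x₁
      = (post κ p₁ x x₁ * Real.exp (r x₁ / β) / Efun κ p₁ r β x) • u x x₁
        - post κ p₁ x x₁ • u x x₁ := by
    intro x₁
    rw [← sub_smul]
    congr 1
    ring
  rw [hvQ, vP]
  simp_rw [hsplit]
  rw [integral_sub hA hB]
  abel


end
end

section
/- Let x ∈ ℝ^d with pₜ(x) > 0, and assume N(x) := ∫ p₁(x₁) exp(r(x₁)/β) κ(x | x₁) dx₁ is finite and positive. Define the importance weight ω(x₁) := κ(x | x₁)/pₜ(x) and D(x) := ∫ p₁(x₁) exp(r(x₁)/β) ω(x₁) dx₁ (so D(x) = N(x)/pₜ(x)). Then the velocity guidance term is expressible as an expectation under the marginal data density: v_q(x) − v_p(x) = ∫ p₁(x₁) ( exp(r(x₁)/β)/D(x) − 1 ) u(x, x₁) ω(x₁) dx₁. In particular the guidance term can be computed by sampling from p₁ alone, without sampling from the posterior p_{1|t}(· | x). -/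
open MeasureTheory Filter

noncomputable section

variable {d : ℕ}

/-- The importance weight `ω(x₁) = κ(x | x₁) / pₜ(x)`. -/
def omegaW (κ : Vec d → Vec d → ℝ) (p₁ : Vec d → ℝ) (x x₁ : Vec d) : ℝ :=
  κ x x₁ / pT κ p₁ x

/-- `N(x) = ∫ p₁(x₁) exp(r(x₁)/β) κ(x | x₁) dx₁`. -/
def Nfun (κ : Vec d → Vec d → ℝ) (p₁ r : Vec d → ℝ) (β : ℝ) (x : Vec d) : ℝ :=
  ∫ x₁, p₁ x₁ * Real.exp (r x₁ / β) * κ x x₁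

/-- `D(x) = ∫ p₁(x₁) exp(r(x₁)/β) ω(x₁) dx₁`. -/
def Dfun (κ : Vec d → Vec d → ℝ) (p₁ r : Vec d → ℝ) (β : ℝ) (x : Vec d) : ℝ :=
  ∫ x₁, p₁ x₁ * Real.exp (r x₁ / β) * omegaW κ p₁ x x₁

private lemma integrable_scalar_smul {d : ℕ} {f : Vec d → ℝ} (hf : Integrable f)
    {g : Vec d → Vec d} (hg : AEStronglyMeasurable g volume) {C : ℝ}
    (hC : ∀ y, ‖g y‖ ≤ C) : Integrable (fun y => f y • g y) := by
  refine (hf.abs.mul_const C).mono' (hf.aestronglyMeasurable.smul hg) ?_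
  filter_upwards with y
  rw [norm_smul, Real.norm_eq_abs]
  exact mul_le_mul_of_nonneg_left (hC y) (abs_nonneg _)

/-- The velocity guidance term is expressible as an expectation under the
marginal data density `p₁`, without sampling from the posterior. -/
theorem velocity_guidance_as_marginal_expectation
    (d : ℕ) (hd : 1 ≤ d)
    -- `p₁` is a probability density
    (p₁ : Vec d → ℝ) (hp₁_meas : Measurable p₁) (hp₁_nonneg : ∀ x₁, 0 ≤ p₁ x₁)
    (hp₁_int : ∫ x₁, p₁ x₁ = 1)
    -- `κ` is a conditional kernel: nonnegative, measurable, a density in its first argument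
    (κ : Vec d → Vec d → ℝ) (hκ_meas : Measurable (Function.uncurry κ))
    (hκ_nonneg : ∀ x x₁, 0 ≤ κ x x₁) (hκ_dens : ∀ x₁, ∫ x, κ x x₁ = 1)
    -- `u` is a measurable bounded conditional velocity field
    (u : Vec d → Vec d → Vec d) (hu_meas : Measurable (Function.uncurry u))
    (hu_bdd : ∃ C, ∀ x x₁, ‖u x x₁‖ ≤ C)
    -- reward `r`, `β > 0`, and `Z` finite and positive
    (r : Vec d → ℝ) (hr_meas : Measurable r) (β : ℝ) (hβ : 0 < β)
    (hZ_int : Integrable (fun x₁ => p₁ x₁ * Real.exp (r x₁ / β)))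
    (hZ_pos : 0 < Zconst p₁ r β)
    -- the point `x`, with `pₜ(x) > 0` and `N(x)` finite and positive
    (x : Vec d) (hpt_pos : 0 < pT κ p₁ x)
    (hN_int : Integrable (fun x₁ => p₁ x₁ * Real.exp (r x₁ / β) * κ x x₁))
    (hN_pos : 0 < Nfun κ p₁ r β x) :
    -- `D(x) = N(x) / pₜ(x)`
    Dfun κ p₁ r β x = Nfun κ p₁ r β x / pT κ p₁ x ∧
    -- the guidance term as an expectation under `p₁`
    vQ κ p₁ r β u x - vP κ p₁ u x
      = ∫ x₁, (p₁ x₁ * (Real.exp (r x₁ / β) / Dfun κ p₁ r β x - 1)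
          * omegaW κ p₁ x x₁) • u x x₁ := by
  obtain ⟨C, hC⟩ := hu_bdd
  have hP0 : pT κ p₁ x ≠ 0 := ne_of_gt hpt_pos
  have hN0 : Nfun κ p₁ r β x ≠ 0 := ne_of_gt hN_pos
  have hZ0 : Zconst p₁ r β ≠ 0 := ne_of_gt hZ_pos
  have hκx : Measurable (κ x) := hκ_meas.comp measurable_prodMk_left
  have hux : Measurable (u x) := hu_meas.comp measurable_prodMk_left
  have hκp_int : Integrable (fun x₁ => κ x x₁ * p₁ x₁) := by
    by_contra h
    rw [pT, integral_undef h] at hpt_pos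
    exact lt_irrefl _ hpt_pos
  have hA : Integrable (fun x₁ => (κ x x₁ * p₁ x₁) • u x x₁) :=
    integrable_scalar_smul hκp_int (hux.aestronglyMeasurable) (fun y => hC x y)
  have hB : Integrable (fun x₁ => (p₁ x₁ * Real.exp (r x₁ / β) * κ x x₁) • u x x₁) :=
    integrable_scalar_smul hN_int (hux.aestronglyMeasurable) (fun y => hC x y)
  have hD : Dfun κ p₁ r β x = Nfun κ p₁ r β x / pT κ p₁ x := by
    unfold Dfun omegaW Nfun
    simp_rw [show ∀ x₁, p₁ x₁ * Real.exp (r x₁ / β) * (κ x x₁ / pT κ p₁ x)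
        = p₁ x₁ * Real.exp (r x₁ / β) * κ x x₁ / pT κ p₁ x from fun _ => by ring,
      integral_div]
  refine ⟨hD, ?_⟩
  have hqT : qT κ p₁ r β x = Nfun κ p₁ r β x / Zconst p₁ r β := by
    unfold qT q1 Nfun
    simp_rw [show ∀ x₁, κ x x₁ * (p₁ x₁ * Real.exp (r x₁ / β) / Zconst p₁ r β)
        = p₁ x₁ * Real.exp (r x₁ / β) * κ x x₁ / Zconst p₁ r β from fun _ => by ring,
      integral_div]
  have hqPost : ∀ x₁, qPost κ p₁ r β x x₁
      = (Nfun κ p₁ r β x)⁻¹ * (p₁ x₁ * Real.exp (r x₁ / β) * κ x x₁) := by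
    intro x₁
    unfold qPost q1
    rw [hqT]
    field_simp
  have hvQ : vQ κ p₁ r β u x
      = (Nfun κ p₁ r β x)⁻¹ • ∫ x₁, (p₁ x₁ * Real.exp (r x₁ / β) * κ x x₁) • u x x₁ := by
    unfold vQ
    simp_rw [hqPost, mul_smul]
    exact integral_smul _ _
  have hvP : vP κ p₁ u x
      = (pT κ p₁ x)⁻¹ • ∫ x₁, (κ x x₁ * p₁ x₁) • u x x₁ := by
    unfold vP post
    simp_rw [div_eq_inv_mul, mul_smul]
    exact integral_smul _ _
  have hpt : ∀ x₁, (p₁ x₁ * (Real.exp (r x₁ / β) / Dfun κ p₁ r β x - 1)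
      * omegaW κ p₁ x x₁) • u x x₁
      = (Nfun κ p₁ r β x)⁻¹ • ((p₁ x₁ * Real.exp (r x₁ / β) * κ x x₁) • u x x₁)
        - (pT κ p₁ x)⁻¹ • ((κ x x₁ * p₁ x₁) • u x x₁) := by
    intro x₁
    rw [smul_smul, smul_smul, ← sub_smul]
    congr 1
    rw [hD]
    unfold omegaW
    field_simp
  rw [hvQ, hvP]
  simp_rw [hpt]
  have hB' : Integrable (fun x₁ => (Nfun κ p₁ r β x)⁻¹
      • ((p₁ x₁ * Real.exp (r x₁ / β) * κ x x₁) • u x x₁)) volume := hB.smul (Nfun κ p₁ r β x)⁻¹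
  have hA' : Integrable (fun x₁ => (pT κ p₁ x)⁻¹
      • ((κ x x₁ * p₁ x₁) • u x x₁)) volume := hA.smul (pT κ p₁ x)⁻¹
  rw [integral_sub hB' hA', integral_smul, integral_smul]


end
end
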